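/- For every ordinal β and every sequence (m_n)_{n∈ℕ} of positive natural numbers, the lexicographic sum Σ_{n∈ℕ} (ω^β · m_n), where each summand is the linear order of ordinals below ω^β · m_n, is order-isomorphic to the linear order of ordinals below ω^{β+1}. -/

import Mathlib

open Ordinal

/-- For every ordinal `β` and every sequence `(m_n)` of positive natural numbers, the
lexicographic sum `Σ_{n∈ℕ} (ω^β · m_n)` of the linear orders of ordinals below
`ω^β · m_n` is order-isomorphic to the linear order of ordinals below `ω^(β+1)`. -/
theorem lexSum_omega_pow_mul_orderIso (β : Ordinal) (m : ℕ → ℕ) (hm : ∀ n, 0 < m n) :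
    Nonempty
      ((Lex ((n : ℕ) × ↥(Set.Iio (omega0 ^ β * (m n : Ordinal))))) ≃o
        ↥(Set.Iio (omega0 ^ (β + 1)))) := by
  set S : ℕ → ℕ := fun n => ∑ k ∈ Finset.range n, m k with hSdef
  have hS0 : S 0 = 0 := by simp [hSdef]
  have hSsucc : ∀ n, S (n + 1) = S n + m n := fun n => Finset.sum_range_succ m n
  have hSmono : StrictMono S := strictMono_nat_of_lt_succ fun n => by
    rw [hSsucc]; exact Nat.lt_add_of_pos_right (hm n)
  have hfind : ∀ k : ℕ, ∃ n, S n ≤ k ∧ k < S (n + 1) := by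
    intro k
    induction k with
    | zero => exact ⟨0, le_of_eq hS0, hS0 ▸ hSmono Nat.zero_lt_one⟩
    | succ k ih =>
      obtain ⟨n, hn1, hn2⟩ := ih
      rcases lt_or_eq_of_le (Nat.succ_le_of_lt hn2) with h | h
      · exact ⟨n, le_trans hn1 (Nat.le_succ k), h⟩
      · exact ⟨n + 1, le_of_eq h.symm, by calc k + 1 = S (n + 1) := h
          _ < S (n + 1 + 1) := hSmono (Nat.lt_succ_self (n+1))⟩
  have hpos : (0 : Ordinal) < omega0 ^ β := opow_pos β omega0_pos
  have hne : (omega0 : Ordinal) ^ β ≠ 0 := hpos.ne'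
  have hlt : ∀ k : ℕ, omega0 ^ β * (k : Ordinal) < omega0 ^ (β + 1) := by
    intro k
    rw [opow_add, opow_one]
    exact (mul_lt_mul_iff_right₀ hpos).2 (nat_lt_omega0 k)
  have hmem : ∀ (n : ℕ) (x : Ordinal), x < omega0 ^ β * (m n : Ordinal) →
      omega0 ^ β * (S n : Ordinal) + x < omega0 ^ (β + 1) := by
    intro n x hx
    calc omega0 ^ β * (S n : Ordinal) + x
        < omega0 ^ β * (S n : Ordinal) + omega0 ^ β * (m n : Ordinal) :=
          add_lt_add_right hx _
      _ = omega0 ^ β * ((S (n + 1) : ℕ) : Ordinal) := by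
          rw [hSsucc]; push_cast; rw [mul_add]
      _ < omega0 ^ (β + 1) := hlt _
  let f : Lex ((n : ℕ) × ↥(Set.Iio (omega0 ^ β * (m n : Ordinal)))) →
      ↥(Set.Iio (omega0 ^ (β + 1))) := fun p =>
    ⟨omega0 ^ β * (S (ofLex p).1 : Ordinal) + ((ofLex p).2 : Ordinal),
      hmem _ _ (ofLex p).2.2⟩
  have hmono : StrictMono f := by
    intro a b hab
    rcases Sigma.Lex.lt_def.mp hab with h | ⟨h, h2⟩
    · -- (ofLex a).1 < (ofLex b).1
      show omega0 ^ β * (S (ofLex a).1 : Ordinal) + ((ofLex a).2 : Ordinal)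
        < omega0 ^ β * (S (ofLex b).1 : Ordinal) + ((ofLex b).2 : Ordinal)
      calc omega0 ^ β * (S (ofLex a).1 : Ordinal) + ((ofLex a).2 : Ordinal)
          < omega0 ^ β * ((S ((ofLex a).1 + 1) : ℕ) : Ordinal) := by
            have := hmem (ofLex a).1 _ (ofLex a).2.2
            calc omega0 ^ β * (S (ofLex a).1 : Ordinal) + ((ofLex a).2 : Ordinal)
                < omega0 ^ β * (S (ofLex a).1 : Ordinal) +
                    omega0 ^ β * (m (ofLex a).1 : Ordinal) :=
                  add_lt_add_right (ofLex a).2.2 _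
              _ = omega0 ^ β * ((S ((ofLex a).1 + 1) : ℕ) : Ordinal) := by
                  rw [hSsucc]; push_cast; rw [mul_add]
        _ ≤ omega0 ^ β * (S (ofLex b).1 : Ordinal) := by
            apply mul_le_mul_right
            exact_mod_cast hSmono.monotone (Nat.succ_le_of_lt h)
        _ ≤ omega0 ^ β * (S (ofLex b).1 : Ordinal) + ((ofLex b).2 : Ordinal) :=
            le_self_add
    · -- same first component
      show omega0 ^ β * (S (ofLex a).1 : Ordinal) + ((ofLex a).2 : Ordinal)
        < omega0 ^ β * (S (ofLex b).1 : Ordinal) + ((ofLex b).2 : Ordinal)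
      obtain ⟨n, x⟩ := a
      obtain ⟨n', y⟩ := b
      dsimp only at h
      subst h
      dsimp only at h2 ⊢
      exact add_lt_add_right (by exact_mod_cast h2) _
  have hsurj : Function.Surjective f := by
    rintro ⟨y, hy⟩
    have hq : y / omega0 ^ β < omega0 := by
      rw [Ordinal.div_lt hne, ← opow_succ]
      exact hy
    obtain ⟨k, hk⟩ := lt_omega0.1 hq
    obtain ⟨n, hn1, hn2⟩ := hfind k
    have hr : y % omega0 ^ β < omega0 ^ β := Ordinal.mod_lt y hne
    set x : Ordinal := omega0 ^ β * ((k - S n : ℕ) : Ordinal) + y % omega0 ^ β with hxdef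
    have hx : x < omega0 ^ β * (m n : Ordinal) := by
      calc x < omega0 ^ β * ((k - S n : ℕ) : Ordinal) + omega0 ^ β :=
            add_lt_add_right hr _
        _ = omega0 ^ β * (((k - S n + 1 : ℕ)) : Ordinal) := by
            push_cast; rw [mul_add, mul_one]
        _ ≤ omega0 ^ β * (m n : Ordinal) := by
            apply mul_le_mul_right
            have : k - S n + 1 ≤ m n := by
              have : k < S n + m n := by rw [← hSsucc]; exact hn2
              omega
            exact_mod_cast this
    refine ⟨toLex ⟨n, ⟨x, hx⟩⟩, ?_⟩
    show (⟨omega0 ^ β * (S n : Ordinal) + x, _⟩ :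
        ↥(Set.Iio (omega0 ^ (β + 1)))) = ⟨y, hy⟩
    ext
    dsimp
    rw [hxdef, ← add_assoc, ← mul_add]
    have : (S n : Ordinal) + ((k - S n : ℕ) : Ordinal) = (k : Ordinal) := by
      rw [← Nat.cast_add]
      congr 1
      omega
    rw [this, ← hk, Ordinal.div_add_mod]
  exact ⟨StrictMono.orderIsoOfSurjective f hmono hsurj⟩
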